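/- For the classical higher-order Euler polynomials (the case q → 1): if w₁, w₂ are odd positive integers, r ≥ 1, and n ≥ 0, then w₁^n Σ_{j₁,…,j_r=0}^{w₁-1} (-1)^{j₁+⋯+j_r} E_n^{(r)}( w₂ x + (w₂/w₁)(j₁+⋯+j_r) ) = w₂^n Σ_{j₁,…,j_r=0}^{w₂-1} (-1)^{j₁+⋯+j_r} E_n^{(r)}( w₁ x + (w₁/w₂)(j₁+⋯+j_r) ). -/

import Mathlib

open PowerSeries
section EulerAux
open Finset

lemma rescale_inv_exp (c : ℝ) :
    rescale c ((exp ℝ + 1)⁻¹) = (rescale c (exp ℝ) + 1)⁻¹ := by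
  have h2 : constantCoeff (exp ℝ + 1) ≠ 0 := by
    simp [constantCoeff_exp]
  have h2' : constantCoeff (rescale c (exp ℝ) + 1) ≠ 0 := by
    have : constantCoeff (rescale c (exp ℝ)) = 1 := by
      rw [← coeff_zero_eq_constantCoeff, coeff_rescale]
      simp [coeff_zero_eq_constantCoeff, constantCoeff_exp]
    simp [this]
  rw [PowerSeries.eq_inv_iff_mul_eq_one h2']
  have : rescale c ((exp ℝ + 1)⁻¹) * rescale c (exp ℝ + 1) = 1 := by
    rw [← map_mul, PowerSeries.inv_mul_cancel _ h2, map_one]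
  simpa [map_add, map_one] using this

lemma geom_odd (c : ℝ) {w : ℕ} (hw : Odd w) :
    (∑ j ∈ Finset.range w, (-(rescale c (exp ℝ)))^j) * (rescale c (exp ℝ) + 1)
      = rescale ((w : ℝ) * c) (exp ℝ) + 1 := by
  have h := geom_sum_mul (-(rescale c (exp ℝ))) w
  have hodd : (-(rescale c (exp ℝ)))^w = -((rescale c (exp ℝ))^w) := hw.neg_pow _
  have hp : (rescale c (exp ℝ))^w = rescale ((w : ℝ) * c) (exp ℝ) := by
    rw [← map_pow, exp_pow_eq_rescale_exp, rescale_rescale]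
  rw [hodd, hp] at h
  linear_combination -h

lemma constCoeff_rescale_exp (c : ℝ) : constantCoeff (rescale c (exp ℝ)) = 1 := by
  rw [← coeff_zero_eq_constantCoeff, coeff_rescale]
  simp [coeff_zero_eq_constantCoeff, constantCoeff_exp]

lemma sym_lemma {w₁ w₂ : ℕ} (h1 : Odd w₁) (h2 : Odd w₂) :
    2 * (rescale (w₁:ℝ) (exp ℝ) + 1)⁻¹ * ∑ j ∈ Finset.range w₁, (-(rescale (w₂:ℝ) (exp ℝ)))^j
    = 2 * (rescale (w₂:ℝ) (exp ℝ) + 1)⁻¹ * ∑ j ∈ Finset.range w₂, (-(rescale (w₁:ℝ) (exp ℝ)))^j := by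
  set E₁ := rescale (w₁:ℝ) (exp ℝ)
  set E₂ := rescale (w₂:ℝ) (exp ℝ)
  have hc1 : constantCoeff (E₁ + 1) ≠ 0 := by simp [E₁, constCoeff_rescale_exp]
  have hc2 : constantCoeff (E₂ + 1) ≠ 0 := by simp [E₂, constCoeff_rescale_exp]
  have hne : (E₁ + 1) * (E₂ + 1) ≠ 0 := by
    intro h
    have := congrArg (constantCoeff) h
    rw [map_mul, map_zero] at this
    exact mul_ne_zero hc1 hc2 this
  apply mul_left_cancel₀ hne
  have hA : (E₁ + 1) * (E₁ + 1)⁻¹ = 1 := PowerSeries.mul_inv_cancel _ hc1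
  have hB : (E₂ + 1) * (E₂ + 1)⁻¹ = 1 := PowerSeries.mul_inv_cancel _ hc2
  have hG1 : (∑ j ∈ Finset.range w₁, (-E₂)^j) * (E₂ + 1)
      = rescale ((w₁ : ℝ) * w₂) (exp ℝ) + 1 := geom_odd _ h1
  have hG2 : (∑ j ∈ Finset.range w₂, (-E₁)^j) * (E₁ + 1)
      = rescale ((w₂ : ℝ) * w₁) (exp ℝ) + 1 := geom_odd _ h2
  rw [mul_comm (w₂:ℝ) (w₁:ℝ)] at hG2
  linear_combination (2*(E₂+1)*(∑ j ∈ Finset.range w₁, (-E₂)^j))*hA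
    - (2*(E₁+1)*(∑ j ∈ Finset.range w₂, (-E₁)^j))*hB + 2*hG1 - 2*hG2

lemma reduce (w₁ w₂ : ℕ) (h0 : (w₁:ℝ) ≠ 0) (r : ℕ) (x : ℝ) :
    ∑ j ∈ Fintype.piFinset (fun _ : Fin r => Finset.range w₁),
      ((-1:ℝ)^(∑ l, j l)) •
        rescale (w₁:ℝ) ((2*(exp ℝ + 1)⁻¹)^r *
          rescale ((w₂:ℝ)*x + ((w₂:ℝ)/w₁)*∑ l, (j l : ℝ)) (exp ℝ))
    = (2*(rescale (w₁:ℝ) (exp ℝ)+1)⁻¹ * ∑ i ∈ Finset.range w₁, (-(rescale (w₂:ℝ) (exp ℝ)))^i)^r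
        * rescale ((w₁:ℝ)*w₂*x) (exp ℝ) := by
  have hE : ∀ (c : ℝ) (m : ℕ), (rescale c (exp ℝ))^m = rescale (c * m) (exp ℝ) := by
    intro c m
    rw [← map_pow, exp_pow_eq_rescale_exp, rescale_rescale, mul_comm]
  have hcard : (∑ i ∈ Finset.range w₁, (-(rescale (w₂:ℝ) (exp ℝ)))^i)^r
      = ∑ j ∈ Fintype.piFinset (fun _ : Fin r => Finset.range w₁),
          ∏ l : Fin r, (-(rescale (w₂:ℝ) (exp ℝ)))^(j l) := by
    rw [← Finset.prod_univ_sum]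
    simp
  conv_rhs => rw [mul_pow, hcard, Finset.mul_sum, Finset.sum_mul]
  apply Finset.sum_congr rfl
  intro j hj
  have hprod : ∏ l : Fin r, (-(rescale (w₂:ℝ) (exp ℝ)))^(j l)
      = (-(rescale (w₂:ℝ) (exp ℝ)))^(∑ l, j l) := Finset.prod_pow_eq_pow_sum _ _ _
  rw [hprod]
  rw [map_mul, map_pow, map_mul, map_ofNat, rescale_inv_exp, rescale_rescale]
  have harg : ((w₂:ℝ)*x + ((w₂:ℝ)/w₁)*∑ l, (j l : ℝ)) * w₁
      = (w₁:ℝ)*w₂*x + (w₂:ℝ) * ((∑ l, j l : ℕ) : ℝ) := by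
    push_cast
    field_simp
  rw [harg, ← exp_mul_exp_eq_exp_add, ← hE]
  rw [smul_eq_C_mul, map_pow, map_neg, map_one, neg_pow]
  ring

end EulerAux

/-- The higher-order Euler polynomial `E_n^{(r)}(x)`, defined as `n!` times the `n`-th
coefficient of the power series `(2/(e^t+1))^r e^{xt}`. -/
noncomputable def eulerPoly (r n : ℕ) (x : ℝ) : ℝ :=
  (n.factorial : ℝ) *
    PowerSeries.coeff n
      ((2 * (PowerSeries.exp ℝ + 1)⁻¹) ^ r * PowerSeries.rescale x (PowerSeries.exp ℝ))

theorem eulerPoly_symmetry (r : ℕ) (hr : 1 ≤ r) (n : ℕ) (w₁ w₂ : ℕ)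
    (hw₁ : Odd w₁) (hw₂ : Odd w₂) (hw₁0 : 0 < w₁) (hw₂0 : 0 < w₂) (x : ℝ) :
    (w₁ : ℝ) ^ n *
        ∑ j ∈ Fintype.piFinset fun _ : Fin r => Finset.range w₁,
          (-1 : ℝ) ^ (∑ l, j l) *
            eulerPoly r n ((w₂ : ℝ) * x + ((w₂ : ℝ) / w₁) * ∑ l, (j l : ℝ)) =
      (w₂ : ℝ) ^ n *
        ∑ j ∈ Fintype.piFinset fun _ : Fin r => Finset.range w₂,
          (-1 : ℝ) ^ (∑ l, j l) *
            eulerPoly r n ((w₁ : ℝ) * x + ((w₁ : ℝ) / w₂) * ∑ l, (j l : ℝ)) := by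
  have step : ∀ (a b : ℕ), (a:ℝ) ≠ 0 →
      (a:ℝ)^n * ∑ j ∈ Fintype.piFinset (fun _ : Fin r => Finset.range a),
        (-1:ℝ)^(∑ l, j l) * eulerPoly r n ((b:ℝ)*x + ((b:ℝ)/a)*∑ l, (j l:ℝ))
      = (n.factorial : ℝ) * coeff n
          ((2*(rescale (a:ℝ) (exp ℝ)+1)⁻¹ * ∑ i ∈ Finset.range a, (-(rescale (b:ℝ) (exp ℝ)))^i)^r
            * rescale ((a:ℝ)*b*x) (exp ℝ)) := by
    intro a b ha
    rw [← reduce a b ha r x, map_sum]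
    unfold eulerPoly
    simp only [map_smul, smul_eq_mul, coeff_rescale]
    rw [Finset.mul_sum, Finset.mul_sum]
    apply Finset.sum_congr rfl
    intro j hj
    ring
  rw [step w₁ w₂ (by positivity), step w₂ w₁ (by positivity), sym_lemma hw₁ hw₂,
    show (w₁:ℝ)*w₂*x = (w₂:ℝ)*w₁*x by ring]
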